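/- The median of a vertex-weighted finite tree with positive weights consists of either a single vertex or two adjacent vertices; that is, any two vertices achieving the minimum weighted distance-sum ds^w are adjacent. -/

import Mathlib

open SimpleGraph

section TreeLemmas

variable {V : Type*} [DecidableEq V] {T : SimpleGraph V}

/-- In a tree, every path realizes the distance between its endpoints. -/
private lemma tree_path_length_eq_dist (hT : T.IsTree) {a b : V} (p : T.Walk a b)
    (hp : p.IsPath) : p.length = T.dist a b := by
  obtain ⟨w, hw⟩ := hT.isConnected.exists_walk_length_eq_dist a b
  have h1 : (⟨p, hp⟩ : T.Path a b) = ⟨w.bypass, w.bypass_isPath⟩ :=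
    hT.IsAcyclic.path_unique _ _
  have h2 : p.length = w.bypass.length := by
    simpa using congrArg (fun q : T.Path a b => q.1.length) h1
  have h3 : w.bypass.length ≤ T.dist a b := hw ▸ w.length_bypass_le
  exact le_antisymm (h2 ▸ h3) (SimpleGraph.dist_le p)

/-- Splitting a geodesic (here: any tree path) at an interior vertex. -/
private lemma tree_dist_split (hT : T.IsTree) {a b c : V} (p : T.Walk a b)
    (hp : p.IsPath) (hc : c ∈ p.support) :
    T.dist a c + T.dist c b = T.dist a b := by
  have h1 := tree_path_length_eq_dist hT (p.takeUntil c hc) (hp.takeUntil hc)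
  have h2 := tree_path_length_eq_dist hT (p.dropUntil c hc) (hp.dropUntil hc)
  have h3 := tree_path_length_eq_dist hT p hp
  have h4 := congrArg Walk.length (p.take_spec hc)
  rw [Walk.length_append] at h4
  omega

/-- Across an edge of a tree, distances to any vertex differ by exactly one. -/
private lemma tree_adj_dist_cases (hT : T.IsTree) {x z : V} (hxz : T.Adj x z) (u : V) :
    T.dist z u = T.dist x u + 1 ∨ T.dist x u = T.dist z u + 1 := by
  obtain ⟨w, hw⟩ := hT.isConnected.exists_walk_length_eq_dist x u
  have hp : w.bypass.IsPath := w.bypass_isPath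
  have hplen : w.bypass.length = T.dist x u := tree_path_length_eq_dist hT _ hp
  by_cases hz : z ∈ w.bypass.support
  · right
    have hs := tree_dist_split hT _ hp hz
    have hxz1 : T.dist x z = 1 := SimpleGraph.dist_eq_one_iff_adj.mpr hxz
    omega
  · left
    have hq : (Walk.cons hxz.symm w.bypass).IsPath := hp.cons hz
    have := tree_path_length_eq_dist hT _ hq
    rw [Walk.length_cons, hplen] at this
    omega

/-- The only edge of a tree crossing the cut determined by the edge `xz`
is the edge `xz` itself. -/
private lemma tree_cut_edge_eq (hT : T.IsTree) {x z : V} (hxz : T.Adj x z) {a b : V}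
    (hab : T.Adj a b)
    (ha : T.dist z a = T.dist x a + 1)
    (hb : T.dist x b = T.dist z b + 1) :
    a = x ∧ b = z := by
  obtain ⟨w1, hw1⟩ := hT.isConnected.exists_walk_length_eq_dist a x
  obtain ⟨w2, hw2⟩ := hT.isConnected.exists_walk_length_eq_dist z b
  set p := w1.bypass with hpdef
  set r := w2.bypass with hrdef
  have hp : p.IsPath := w1.bypass_isPath
  have hr : r.IsPath := w2.bypass_isPath
  have hplen : p.length = T.dist a x := tree_path_length_eq_dist hT p hp
  have hrlen : r.length = T.dist z b := tree_path_length_eq_dist hT r hr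
  -- all vertices of p are on the x-side
  have hpx : ∀ c ∈ p.support, T.dist z c = T.dist x c + 1 := by
    intro c hc
    have hs := tree_dist_split hT p hp hc
    have htri : T.dist z a ≤ T.dist z c + T.dist c a := hT.isConnected.dist_triangle
    have hca : T.dist c a = T.dist a c := SimpleGraph.dist_comm
    have hcx : T.dist c x = T.dist x c := SimpleGraph.dist_comm
    have hax : T.dist a x = T.dist x a := SimpleGraph.dist_comm
    rcases tree_adj_dist_cases hT hxz c with h | h
    · exact h
    · omega
  -- all vertices of r are on the z-side
  have hrz : ∀ c ∈ r.support, T.dist x c = T.dist z c + 1 := by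
    intro c hc
    have hs := tree_dist_split hT r hr hc
    have htri : T.dist x b ≤ T.dist x c + T.dist c b := hT.isConnected.dist_triangle
    rcases tree_adj_dist_cases hT hxz c with h | h
    · omega
    · exact h
  -- the walk a → x → z → b is a path
  have hq2 : (p.append (Walk.cons hxz r)).IsPath := by
    rw [Walk.isPath_def, Walk.support_append]
    have : (Walk.cons hxz r).support.tail = r.support := by
      simp [Walk.support_cons]
    rw [this]
    refine List.Nodup.append hp.support_nodup hr.support_nodup ?_
    intro c hcp hcr
    have h1 := hpx c hcp
    have h2 := hrz c hcr
    omega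
  have hone : (Walk.cons hab Walk.nil).IsPath := by
    simp [Walk.isPath_def, hab.ne]
  have heq : (⟨p.append (Walk.cons hxz r), hq2⟩ : T.Path a b)
      = ⟨Walk.cons hab Walk.nil, hone⟩ := hT.IsAcyclic.path_unique _ _
  have hlen : (p.append (Walk.cons hxz r)).length = 1 := by
    simpa using congrArg (fun q : T.Path a b => q.1.length) heq
  rw [Walk.length_append, Walk.length_cons, hplen, hrlen] at hlen
  have hax0 : T.dist a x = 0 := by omega
  have hzb0 : T.dist z b = 0 := by omega
  exact ⟨hT.isConnected.dist_eq_zero_iff.mp hax0,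
    (hT.isConnected.dist_eq_zero_iff.mp hzb0).symm⟩

/-- Any walk from the `x`-side to the `z`-side passes through `x`. -/
private lemma tree_mem_support_of_cross (hT : T.IsTree) {x z : V} (hxz : T.Adj x z) :
    ∀ {u v : V} (q : T.Walk u v),
      T.dist z u = T.dist x u + 1 → T.dist x v = T.dist z v + 1 → x ∈ q.support := by
  intro u v q
  induction q with
  | nil =>
    intro h1 h2
    omega
  | @cons u c v h q ih =>
    intro h1 h2
    rcases tree_adj_dist_cases hT hxz c with hc | hc
    · rw [Walk.support_cons]
      exact List.mem_cons_of_mem _ (ih hc h2)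
    · obtain ⟨hux, -⟩ := tree_cut_edge_eq hT hxz h h1 hc
      rw [Walk.support_cons, hux]
      exact List.mem_cons_self

/-- Distance from the `x`-side to the `z`-side goes through the edge `xz`. -/
private lemma tree_dist_through_edge (hT : T.IsTree) {x z : V} (hxz : T.Adj x z)
    {u v : V} (hu : T.dist z u = T.dist x u + 1) (hv : T.dist x v = T.dist z v + 1) :
    T.dist u v = T.dist u x + 1 + T.dist z v := by
  obtain ⟨w, hw⟩ := hT.isConnected.exists_walk_length_eq_dist u v
  have hp : w.bypass.IsPath := w.bypass_isPath
  have hplen : w.bypass.length = T.dist u v := tree_path_length_eq_dist hT _ hp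
  have hxmem : x ∈ w.bypass.support := tree_mem_support_of_cross hT hxz _ hu hv
  have hs := tree_dist_split hT _ hp hxmem
  omega

end TreeLemmas

/-- The median of a vertex-weighted finite tree with positive weights consists
of a single vertex or two adjacent vertices: any two distinct vertices that
both minimize the weighted distance-sum are adjacent. -/
theorem vertex_weighted_tree_median_adjacent {V : Type*} [Fintype V]
    (T : SimpleGraph V) (hT : T.IsTree) (f : V → ℝ) (hf : ∀ v, 0 < f v)
    (x y : V)
    (hx : ∀ v : V, ∑ u : V, (T.dist x u : ℝ) * f u ≤ ∑ u : V, (T.dist v u : ℝ) * f u)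
    (hy : ∀ v : V, ∑ u : V, (T.dist y u : ℝ) * f u ≤ ∑ u : V, (T.dist v u : ℝ) * f u)
    (hne : x ≠ y) :
    T.Adj x y := by
  classical
  by_contra hadj
  have hc := hT.isConnected
  have hL1 : T.dist x y ≠ 1 := fun h => hadj (SimpleGraph.dist_eq_one_iff_adj.mp h)
  have hL0 : 0 < T.dist x y := hc.pos_dist_of_ne hne
  have hL2 : 2 ≤ T.dist x y := by omega
  -- get the neighbor z of x on the geodesic to y
  obtain ⟨w, hw⟩ := hc.exists_walk_length_eq_dist x y
  obtain ⟨z, hxz, q, hq⟩ : ∃ z, T.Adj x z ∧ ∃ q : T.Walk z y,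
      q.length + 1 = T.dist x y := by
    cases w with
    | nil => rw [Walk.length_nil] at hw; omega
    | cons h q => exact ⟨_, h, q, by rw [Walk.length_cons] at hw; omega⟩
  have hzy : T.dist x y = T.dist z y + 1 := by
    have h1 : T.dist z y ≤ q.length := SimpleGraph.dist_le q
    have h2 : T.dist x y ≤ T.dist x z + T.dist z y := hc.dist_triangle
    have h3 : T.dist x z = 1 := SimpleGraph.dist_eq_one_iff_adj.mpr hxz
    omega
  set L : ℝ := (T.dist x y : ℝ) with hLdef
  have hLcast : (2 : ℝ) ≤ L := by rw [hLdef]; exact_mod_cast hL2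
  -- the pointwise inequality
  have key : ∀ u : V,
      ((T.dist z u : ℝ) - T.dist x u) * (L * f u)
        + (if u = z then (2 * L - 2) * f z else 0)
      ≤ ((T.dist y u : ℝ) - T.dist x u) * f u := by
    intro u
    rcases tree_adj_dist_cases hT hxz u with h | h
    · -- u is on the x-side
      have huz : u ≠ z := by
        intro he
        rw [he, SimpleGraph.dist_self] at h
        omega
      have hd : T.dist u y = T.dist u x + 1 + T.dist z y :=
        tree_dist_through_edge hT hxz h hzy
      have hyu : T.dist y u = T.dist x u + T.dist x y := by
        have h1 : T.dist u y = T.dist y u := SimpleGraph.dist_comm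
        have h2 : T.dist u x = T.dist x u := SimpleGraph.dist_comm
        omega
      rw [if_neg huz, hyu, h]
      apply le_of_eq
      push_cast
      ring
    · -- u is on the z-side
      have hdz : (T.dist x u : ℝ) = (T.dist z u : ℝ) + 1 := by exact_mod_cast h
      by_cases huz : u = z
      · subst huz
        have hd1 : T.dist x u = 1 := SimpleGraph.dist_eq_one_iff_adj.mpr hxz
        have hd0 : T.dist u u = 0 := SimpleGraph.dist_self
        have hd2 : T.dist y u = T.dist u y := SimpleGraph.dist_comm
        have hd4 : T.dist y u + 1 = T.dist x y := by omega
        have hd3 : (T.dist y u : ℝ) = L - 1 := by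
          rw [hLdef, ← hd4]
          push_cast
          ring
        apply le_of_eq
        rw [if_pos rfl, hd3, hd0, hd1]
        push_cast
        ring
      · rw [if_neg huz, add_zero]
        have htri : T.dist x u ≤ T.dist x y + T.dist y u := hc.dist_triangle
        have hsub : -L ≤ (T.dist y u : ℝ) - T.dist x u := by
          rw [hLdef]
          have : (T.dist x u : ℝ) ≤ (T.dist x y : ℝ) + T.dist y u := by
            exact_mod_cast htri
          linarith
        have hneg : ((T.dist z u : ℝ) - T.dist x u) = -1 := by linarith
        rw [hneg]
        nlinarith [(hf u).le, hsub]
  -- sum up the pointwise inequality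
  have hsum := Finset.sum_le_sum (s := Finset.univ) (fun u _ => key u)
  rw [Finset.sum_add_distrib] at hsum
  have h1 : ∑ u : V, (if u = z then (2 * L - 2) * f z else 0) = (2 * L - 2) * f z := by
    simp
  have h2 : ∑ u : V, ((T.dist z u : ℝ) - T.dist x u) * (L * f u)
      = L * ((∑ u : V, (T.dist z u : ℝ) * f u)
          - ∑ u : V, (T.dist x u : ℝ) * f u) := by
    rw [mul_sub, Finset.mul_sum, Finset.mul_sum, ← Finset.sum_sub_distrib]
    exact Finset.sum_congr rfl fun u _ => by ring
  have h3 : ∑ u : V, ((T.dist y u : ℝ) - T.dist x u) * f u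
      = (∑ u : V, (T.dist y u : ℝ) * f u)
          - ∑ u : V, (T.dist x u : ℝ) * f u := by
    rw [← Finset.sum_sub_distrib]
    exact Finset.sum_congr rfl fun u _ => by ring
  rw [h1, h2, h3] at hsum
  have hA : 0 ≤ L * ((∑ u : V, (T.dist z u : ℝ) * f u)
      - ∑ u : V, (T.dist x u : ℝ) * f u) :=
    mul_nonneg (by linarith) (by linarith [hx z])
  have hB : 0 < (2 * L - 2) * f z := mul_pos (by linarith) (hf z)
  linarith [hy x]
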